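/- Let d ≥ 2 be an integer and let Π₁, Π₂ be orthogonal projection matrices on ℂ^d of ranks r₁ and r₂ respectively, with range(Π₁) ⊆ range(Π₂). Then ∫ (U ⊗ U)(Π₁ ⊗ Π₂)(U† ⊗ U†) dμ(U) = (r₁/(d·(d²−1)))·((r₂·d − 1)·I + (d − r₂)·W), where ⊗ denotes the Kronecker product of matrices, I is the identity matrix on ℂ^d ⊗ ℂ^d, and W is the swap matrix on ℂ^d ⊗ ℂ^d whose ((i,j),(k,l)) entry is 1 if i = l and j = k, and 0 otherwise. -/

import Mathlib

open MeasureTheory Matrix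
open scoped ComplexOrder Kronecker

noncomputable section

instance {m n : Type*} : MeasurableSpace (Matrix m n ℂ) :=
  inferInstanceAs (MeasurableSpace (m → n → ℂ))

/-- The swap matrix `W` on `ℂ^d ⊗ ℂ^d`. -/
noncomputable def swapMatrix (d : ℕ) : Matrix (Fin d × Fin d) (Fin d × Fin d) ℂ :=
  Matrix.of fun p q => if p.1 = q.2 ∧ p.2 = q.1 then 1 else 0

instance {m n : Type*} [Fintype m] [Fintype n] : BorelSpace (Matrix m n ℂ) :=
  inferInstanceAs (BorelSpace (m → n → ℂ))

namespace Stmt19Aux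

variable {d : ℕ}

/-- entries of a unitary matrix have norm at most 1 -/
lemma unitary_entry_norm_le (U : Matrix.unitaryGroup (Fin d) ℂ) (i j : Fin d) :
    ‖(U : Matrix (Fin d) (Fin d) ℂ) i j‖ ≤ 1 := by
  have h1 : (star (U : Matrix (Fin d) (Fin d) ℂ) * U) j j = 1 := by
    rw [Matrix.mem_unitaryGroup_iff'.mp U.2]
    simp
  rw [Matrix.mul_apply] at h1
  have h2 : ∀ k, (star (U : Matrix (Fin d) (Fin d) ℂ)) j k * (U : Matrix (Fin d) (Fin d) ℂ) k j
      = (‖(U : Matrix (Fin d) (Fin d) ℂ) k j‖ ^ 2 : ℝ) := by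
    intro k
    simp [Matrix.star_apply, Complex.star_def, Complex.conj_mul']
  rw [Finset.sum_congr rfl (fun k _ => h2 k)] at h1
  rw [← Complex.ofReal_sum] at h1
  have h3 : (∑ k, ‖(U : Matrix (Fin d) (Fin d) ℂ) k j‖ ^ 2) = 1 := by
    exact_mod_cast h1
  have h4 : ‖(U : Matrix (Fin d) (Fin d) ℂ) i j‖ ^ 2 ≤ 1 := by
    rw [← h3]
    exact Finset.single_le_sum (f := fun k => ‖(U : Matrix (Fin d) (Fin d) ℂ) k j‖ ^ 2)
      (fun k _ => sq_nonneg _) (Finset.mem_univ i)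
  nlinarith [norm_nonneg ((U : Matrix (Fin d) (Fin d) ℂ) i j)]


abbrev G (d : ℕ) := Matrix.unitaryGroup (Fin d) ℂ

instance {d : ℕ} : BorelSpace (Matrix.unitaryGroup (Fin d) ℂ) := Subtype.borelSpace _

variable (d) in
/-- the twirl integrand -/
def twirl (A : Matrix (Fin d × Fin d) (Fin d × Fin d) ℂ) (U : G d) :
    Matrix (Fin d × Fin d) (Fin d × Fin d) ℂ :=
  (((U : Matrix (Fin d) (Fin d) ℂ) ⊗ₖ (U : Matrix (Fin d) (Fin d) ℂ)) * A *
    (star (U : Matrix (Fin d) (Fin d) ℂ) ⊗ₖ star (U : Matrix (Fin d) (Fin d) ℂ)))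

lemma continuous_coe : Continuous (fun U : G d => (U : Matrix (Fin d) (Fin d) ℂ)) :=
  continuous_subtype_val

lemma continuous_twirl (A : Matrix (Fin d × Fin d) (Fin d × Fin d) ℂ) :
    Continuous (twirl d A) := by
  have hc : Continuous (fun U : G d =>
      ((U : Matrix (Fin d) (Fin d) ℂ) ⊗ₖ (U : Matrix (Fin d) (Fin d) ℂ))) := by
    apply continuous_matrix
    intro p q
    exact ((continuous_coe.matrix_elem p.1 q.1).mul (continuous_coe.matrix_elem p.2 q.2))
  have hcs : Continuous (fun U : G d =>
      (star (U : Matrix (Fin d) (Fin d) ℂ) ⊗ₖ star (U : Matrix (Fin d) (Fin d) ℂ))) := by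
    apply continuous_matrix
    intro p q
    exact ((continuous_coe.matrix_conjTranspose.matrix_elem p.1 q.1).mul
      (continuous_coe.matrix_conjTranspose.matrix_elem p.2 q.2))
  exact (hc.matrix_mul continuous_const).matrix_mul hcs

lemma norm_twirl_le (A : Matrix (Fin d × Fin d) (Fin d × Fin d) ℂ) (U : G d)
    (p q : Fin d × Fin d) : ‖twirl d A U p q‖ ≤ ∑ r, ∑ s, ‖A r s‖ := by
  have hb : ∀ (B : Matrix (Fin d) (Fin d) ℂ), (∀ i j, ‖B i j‖ ≤ 1) →
      ∀ p q : Fin d × Fin d, ‖(B ⊗ₖ B) p q‖ ≤ 1 := by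
    intro B hB p q
    rw [Matrix.kroneckerMap_apply, norm_mul]
    calc ‖B p.1 q.1‖ * ‖B p.2 q.2‖ ≤ 1 * 1 :=
      mul_le_mul (hB _ _) (hB _ _) (norm_nonneg _) zero_le_one
    _ = 1 := by ring
  have hU : ∀ i j, ‖(U : Matrix (Fin d) (Fin d) ℂ) i j‖ ≤ 1 := unitary_entry_norm_le U
  have hsU : ∀ i j, ‖(star (U : Matrix (Fin d) (Fin d) ℂ)) i j‖ ≤ 1 := by
    intro i j
    rw [Matrix.star_apply, norm_star]
    exact hU j i
  calc ‖twirl d A U p q‖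
      = ‖∑ s, (∑ r, ((U : Matrix (Fin d) (Fin d) ℂ) ⊗ₖ (U : Matrix (Fin d) (Fin d) ℂ)) p r
          * A r s) * (star (U : Matrix (Fin d) (Fin d) ℂ) ⊗ₖ
            star (U : Matrix (Fin d) (Fin d) ℂ)) s q‖ := by
        rw [twirl, Matrix.mul_apply]
        simp_rw [Matrix.mul_apply]
    _ ≤ ∑ s, ‖(∑ r, ((U : Matrix (Fin d) (Fin d) ℂ) ⊗ₖ (U : Matrix (Fin d) (Fin d) ℂ)) p r
          * A r s) * (star (U : Matrix (Fin d) (Fin d) ℂ) ⊗ₖ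
            star (U : Matrix (Fin d) (Fin d) ℂ)) s q‖ := norm_sum_le _ _
    _ ≤ ∑ s, ∑ r, ‖A r s‖ := by
        apply Finset.sum_le_sum
        intro s _
        rw [norm_mul]
        calc ‖∑ r, ((U : Matrix (Fin d) (Fin d) ℂ) ⊗ₖ (U : Matrix (Fin d) (Fin d) ℂ)) p r
              * A r s‖ * ‖(star (U : Matrix (Fin d) (Fin d) ℂ) ⊗ₖ
                star (U : Matrix (Fin d) (Fin d) ℂ)) s q‖
            ≤ (∑ r, ‖A r s‖) * 1 := by
              apply mul_le_mul _ (hb _ hsU _ _) (norm_nonneg _)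
                (Finset.sum_nonneg fun _ _ => norm_nonneg _)
              calc ‖∑ r, ((U : Matrix (Fin d) (Fin d) ℂ) ⊗ₖ (U : Matrix (Fin d) (Fin d) ℂ)) p r
                    * A r s‖ ≤ ∑ r, ‖((U : Matrix (Fin d) (Fin d) ℂ) ⊗ₖ
                      (U : Matrix (Fin d) (Fin d) ℂ)) p r * A r s‖ := norm_sum_le _ _
                _ ≤ ∑ r, ‖A r s‖ := by
                    apply Finset.sum_le_sum
                    intro r _
                    rw [norm_mul]
                    calc ‖((U : Matrix (Fin d) (Fin d) ℂ) ⊗ₖ (U : Matrix (Fin d) (Fin d) ℂ)) p r‖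
                          * ‖A r s‖ ≤ 1 * ‖A r s‖ :=
                        mul_le_mul_of_nonneg_right (hb _ hU _ _) (norm_nonneg _)
                      _ = ‖A r s‖ := one_mul _
          _ = ∑ r, ‖A r s‖ := mul_one _
    _ = ∑ r, ∑ s, ‖A r s‖ := Finset.sum_comm

lemma integrable_twirl (μ : Measure (G d)) [IsProbabilityMeasure μ]
    (A : Matrix (Fin d × Fin d) (Fin d × Fin d) ℂ) (p q : Fin d × Fin d) :
    Integrable (fun U => twirl d A U p q) μ := by
  apply (integrable_const ((∑ r, ∑ s, ‖A r s‖ : ℝ))).mono'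
  · exact (((continuous_twirl A).matrix_elem p q).aestronglyMeasurable)
  · exact Filter.Eventually.of_forall fun U => norm_twirl_le A U p q


variable (d) in
def Mint (μ : Measure (G d)) (A : Matrix (Fin d × Fin d) (Fin d × Fin d) ℂ) :
    Matrix (Fin d × Fin d) (Fin d × Fin d) ℂ :=
  Matrix.of fun p q => ∫ U, twirl d A U p q ∂μ

lemma conj_twirl (A : Matrix (Fin d × Fin d) (Fin d × Fin d) ℂ) (V U : G d) :
    (((V : Matrix (Fin d) (Fin d) ℂ) ⊗ₖ (V : Matrix (Fin d) (Fin d) ℂ)) * twirl d A U *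
      (star (V : Matrix (Fin d) (Fin d) ℂ) ⊗ₖ star (V : Matrix (Fin d) (Fin d) ℂ)))
      = twirl d A (V * U) := by
  simp only [twirl, MulMemClass.coe_mul, StarMul.star_mul]
  rw [Matrix.mul_kronecker_mul, Matrix.mul_kronecker_mul]
  simp only [mul_assoc]

lemma invariance (μ : Measure (G d)) [μ.IsHaarMeasure] [IsProbabilityMeasure μ]
    (A : Matrix (Fin d × Fin d) (Fin d × Fin d) ℂ) (V : G d) :
    (((V : Matrix (Fin d) (Fin d) ℂ) ⊗ₖ (V : Matrix (Fin d) (Fin d) ℂ)) * Mint d μ A *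
      (star (V : Matrix (Fin d) (Fin d) ℂ) ⊗ₖ star (V : Matrix (Fin d) (Fin d) ℂ)))
      = Mint d μ A := by
  set X := ((V : Matrix (Fin d) (Fin d) ℂ) ⊗ₖ (V : Matrix (Fin d) (Fin d) ℂ)) with hX
  set Y := (star (V : Matrix (Fin d) (Fin d) ℂ) ⊗ₖ star (V : Matrix (Fin d) (Fin d) ℂ)) with hY
  ext p q
  have key : (X * Mint d μ A * Y) p q
      = ∫ U, (X * twirl d A U * Y) p q ∂μ := by
    calc (X * Mint d μ A * Y) p q
        = ∑ s, (∑ r, X p r * (∫ U, twirl d A U r s ∂μ)) * Y s q := by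
          simp [Matrix.mul_apply, Mint]
      _ = ∑ s, ∑ r, ∫ U, X p r * twirl d A U r s * Y s q ∂μ := by
          refine Finset.sum_congr rfl fun s _ => ?_
          rw [Finset.sum_mul]
          refine Finset.sum_congr rfl fun r _ => ?_
          rw [← integral_const_mul, ← integral_mul_const]
      _ = ∫ U, ∑ s, ∑ r, X p r * twirl d A U r s * Y s q ∂μ := by
          rw [integral_finset_sum _ (fun s _ => integrable_finset_sum _
            (fun r _ => ((integrable_twirl μ A r s).const_mul _).mul_const _))]
          refine Finset.sum_congr rfl fun s _ => ?_
          rw [integral_finset_sum _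
            (fun r _ => ((integrable_twirl μ A r s).const_mul _).mul_const _)]
      _ = ∫ U, (X * twirl d A U * Y) p q ∂μ := by
          congr 1
          funext U
          simp [Matrix.mul_apply, Finset.sum_mul]
  rw [key]
  simp only [hX, hY]
  simp_rw [conj_twirl]
  exact integral_mul_left_eq_self (fun U => twirl d A U p q) V

lemma inv_entry (μ : Measure (G d)) [μ.IsHaarMeasure] [IsProbabilityMeasure μ]
    (A : Matrix (Fin d × Fin d) (Fin d × Fin d) ℂ) (V : G d) (p q : Fin d × Fin d) :
    ∑ s, (∑ r, (((V : Matrix (Fin d) (Fin d) ℂ) ⊗ₖ (V : Matrix (Fin d) (Fin d) ℂ)) p r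
        * Mint d μ A r s)) *
      (starRingEnd ℂ) ((((V : Matrix (Fin d) (Fin d) ℂ) ⊗ₖ (V : Matrix (Fin d) (Fin d) ℂ))) q s)
      = Mint d μ A p q := by
  conv_rhs => rw [← invariance μ A V]
  rw [Matrix.mul_apply]
  simp only [Matrix.mul_apply]
  refine Finset.sum_congr rfl fun s _ => ?_
  congr 1
  simp [Matrix.kroneckerMap_apply, Matrix.star_apply, _root_.map_mul]


variable (d) in
def phaseU (t : Fin d) : G d :=
  ⟨Matrix.diagonal (fun k => if k = t then Complex.I else 1), by
    rw [Matrix.mem_unitaryGroup_iff, Matrix.star_eq_conjTranspose,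
      Matrix.diagonal_conjTranspose, Matrix.diagonal_mul_diagonal]
    ext i j
    by_cases hij : i = j
    · subst hij
      by_cases hi : i = t <;>
        simp [Matrix.diagonal_apply_eq, hi, Pi.star_apply, Complex.star_def, Complex.conj_I,
          Matrix.one_apply]
    · simp [Matrix.diagonal_apply_ne _ hij, Matrix.one_apply, hij]⟩

lemma phaseU_coe (t : Fin d) : ((phaseU d t : G d) : Matrix (Fin d) (Fin d) ℂ)
    = Matrix.diagonal (fun k => if k = t then Complex.I else 1) := rfl

lemma phase_rel (μ : Measure (G d)) [μ.IsHaarMeasure] [IsProbabilityMeasure μ]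
    (A : Matrix (Fin d × Fin d) (Fin d × Fin d) ℂ) (t : Fin d) (p q : Fin d × Fin d) :
    ((if p.1 = t then Complex.I else 1) * (if p.2 = t then Complex.I else 1)) * Mint d μ A p q *
      (starRingEnd ℂ) ((if q.1 = t then Complex.I else 1) * (if q.2 = t then Complex.I else 1))
      = Mint d μ A p q := by
  have h := inv_entry μ A (phaseU d t) p q
  simp only [phaseU_coe, Matrix.diagonal_kronecker_diagonal, Matrix.diagonal_apply, ite_mul,
    zero_mul, Finset.sum_ite_eq, Finset.mem_univ, if_true, _root_.map_mul, apply_ite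
    (starRingEnd ℂ), map_zero, _root_.map_one, mul_ite, mul_zero, mul_one] at h
  by_cases h1 : p.1 = t <;> by_cases h2 : p.2 = t <;> by_cases h3 : q.1 = t <;>
    by_cases h4 : q.2 = t <;>
    simp only [h1, h2, h3, h4, if_true, if_false, eq_self_iff_true, ite_true, ite_false,
      _root_.map_mul, _root_.map_one, Complex.conj_I] at h ⊢ <;>
    try linear_combination h


lemma eq_zero_of_phase {a b z : ℂ} (h : a * z * b = z) (hab : a * b ≠ 1) : z = 0 := by
  have h2 : (a * b - 1) * z = 0 := by linear_combination h
  rcases mul_eq_zero.mp h2 with h3 | h3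
  · exact absurd (sub_eq_zero.mp h3) hab
  · exact h3

lemma Mint_eq_zero (μ : Measure (G d)) [μ.IsHaarMeasure] [IsProbabilityMeasure μ]
    (A : Matrix (Fin d × Fin d) (Fin d × Fin d) ℂ) (p q : Fin d × Fin d)
    (hne : q ≠ p) (hns : q ≠ Prod.swap p) : Mint d μ A p q = 0 := by
  have hpq : ¬(q.1 = p.1 ∧ q.2 = p.2) := fun h => hne (Prod.ext h.1 h.2)
  have hps : ¬(q.1 = p.2 ∧ q.2 = p.1) := fun h => hns (Prod.ext h.1 h.2)
  by_cases hk : q.1 ≠ p.1 ∧ q.1 ≠ p.2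
  · have h := phase_rel μ A q.1 p q
    rw [if_neg (fun hh => hk.1 hh.symm), if_neg (fun hh => hk.2 hh.symm), if_pos rfl] at h
    by_cases hl : q.2 = q.1
    · rw [if_pos hl] at h
      exact eq_zero_of_phase h (by
        simp [Complex.conj_I, Complex.I_mul_I, Complex.ext_iff]; try norm_num)
    · rw [if_neg hl] at h
      exact eq_zero_of_phase h (by
        simp [Complex.conj_I, Complex.I_mul_I, Complex.ext_iff]; try norm_num)
  by_cases hl2 : q.2 ≠ p.1 ∧ q.2 ≠ p.2
  · have h := phase_rel μ A q.2 p q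
    rw [if_neg (fun hh => hl2.1 hh.symm), if_neg (fun hh => hl2.2 hh.symm), if_pos rfl] at h
    by_cases hl : q.1 = q.2
    · rw [if_pos hl] at h
      exact eq_zero_of_phase h (by
        simp [Complex.conj_I, Complex.I_mul_I, Complex.ext_iff]; try norm_num)
    · rw [if_neg hl] at h
      exact eq_zero_of_phase h (by
        simp [Complex.conj_I, Complex.I_mul_I, Complex.ext_iff]; try norm_num)
  by_cases hi : p.1 ≠ q.1 ∧ p.1 ≠ q.2
  · have h := phase_rel μ A p.1 p q
    by_cases hl : p.2 = p.1
    · rw [if_pos rfl, if_pos hl, if_neg (show ¬q.1 = p.1 from fun hh => hi.1 hh.symm),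
        if_neg (show ¬q.2 = p.1 from fun hh => hi.2 hh.symm)] at h
      exact eq_zero_of_phase h (by
        simp [Complex.conj_I, Complex.I_mul_I, Complex.ext_iff]; try norm_num)
    · rw [if_pos rfl, if_neg hl, if_neg (show ¬q.1 = p.1 from fun hh => hi.1 hh.symm),
        if_neg (show ¬q.2 = p.1 from fun hh => hi.2 hh.symm)] at h
      exact eq_zero_of_phase h (by
        simp [Complex.conj_I, Complex.I_mul_I, Complex.ext_iff]; try norm_num)
  by_cases hj : p.2 ≠ q.1 ∧ p.2 ≠ q.2
  · have h := phase_rel μ A p.2 p q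
    by_cases hl : p.1 = p.2
    · rw [if_pos hl, if_pos rfl, if_neg (show ¬q.1 = p.2 from fun hh => hj.1 hh.symm),
        if_neg (show ¬q.2 = p.2 from fun hh => hj.2 hh.symm)] at h
      exact eq_zero_of_phase h (by
        simp [Complex.conj_I, Complex.I_mul_I, Complex.ext_iff]; try norm_num)
    · rw [if_neg hl, if_pos rfl, if_neg (show ¬q.1 = p.2 from fun hh => hj.1 hh.symm),
        if_neg (show ¬q.2 = p.2 from fun hh => hj.2 hh.symm)] at h
      exact eq_zero_of_phase h (by
        simp [Complex.conj_I, Complex.I_mul_I, Complex.ext_iff]; try norm_num)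
  · push_neg at hk hl2 hi hj
    exfalso
    by_cases h1 : q.1 = p.1
    · by_cases h2 : q.2 = p.1
      · have h3 : p.2 = p.1 := by
          by_cases hc : p.2 = q.1
          · rw [hc, h1]
          · rw [hj hc, h2]
        exact hpq ⟨h1, h2.trans h3.symm⟩
      · exact hpq ⟨h1, hl2 h2⟩
    · have h1' : q.1 = p.2 := hk h1
      by_cases h2 : q.2 = p.1
      · exact hps ⟨h1', h2⟩
      · have h2' : q.2 = p.2 := hl2 h2
        have h3 : p.1 = p.2 := by
          by_cases hc : p.1 = q.1
          · rw [hc, h1']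
          · rw [hi hc, h2']
        exact h2 (h2'.trans h3.symm)


variable (d) in
def permU (sg : Equiv.Perm (Fin d)) : G d :=
  ⟨Matrix.of fun i j => if sg j = i then 1 else 0, by
    rw [Matrix.mem_unitaryGroup_iff']
    ext i j
    simp only [Matrix.mul_apply, Matrix.star_apply, Matrix.of_apply, apply_ite (star : ℂ → ℂ), star_one,
      star_zero, ite_mul, zero_mul, one_mul, Finset.sum_ite_eq, Finset.mem_univ, if_true]
    simp [Matrix.one_apply, EmbeddingLike.apply_eq_iff_eq, eq_comm]⟩

lemma permU_coe (sg : Equiv.Perm (Fin d)) : ((permU d sg : G d) : Matrix (Fin d) (Fin d) ℂ)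
    = Matrix.of fun i j => if sg j = i then 1 else 0 := rfl

lemma perm_rel (μ : Measure (G d)) [μ.IsHaarMeasure] [IsProbabilityMeasure μ]
    (A : Matrix (Fin d × Fin d) (Fin d × Fin d) ℂ) (sg : Equiv.Perm (Fin d))
    (p q : Fin d × Fin d) :
    Mint d μ A (sg p.1, sg p.2) (sg q.1, sg q.2) = Mint d μ A p q := by
  have h := inv_entry μ A (permU d sg) (sg p.1, sg p.2) (sg q.1, sg q.2)
  rw [← h]
  simp only [permU_coe, Matrix.kroneckerMap_apply, Matrix.of_apply, EmbeddingLike.apply_eq_iff_eq,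
    _root_.map_mul, apply_ite (starRingEnd ℂ), _root_.map_one, map_zero, ite_mul, zero_mul,
    one_mul, mul_ite, mul_zero, mul_one]
  rw [Fintype.sum_prod_type]
  simp only [Finset.sum_ite_eq', Finset.mem_univ, if_true]
  rw [Fintype.sum_prod_type]
  simp only [Finset.sum_ite_eq', Finset.mem_univ, if_true]


variable (d) in
def e0 (hd : 2 ≤ d) : Fin d := ⟨0, by omega⟩
variable (d) in
def e1 (hd : 2 ≤ d) : Fin d := ⟨1, by omega⟩

lemma e0_ne_e1 (hd : 2 ≤ d) : e0 d hd ≠ e1 d hd := by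
  simp [e0, e1, Fin.ext_iff]

/-- sum over `Fin d` of a function supported on `{e0, e1}` -/
lemma sum_two {M' : Type*} [AddCommMonoid M'] (hd : 2 ≤ d) (g : Fin d → M')
    (hg : ∀ x, x ≠ e0 d hd → x ≠ e1 d hd → g x = 0) :
    ∑ x, g x = g (e0 d hd) + g (e1 d hd) := by
  rw [← Finset.sum_pair (e0_ne_e1 hd)]
  refine (Finset.sum_subset (Finset.subset_univ _) ?_).symm
  intro x _ hx
  simp only [Finset.mem_insert, Finset.mem_singleton] at hx
  push_neg at hx
  exact hg x hx.1 hx.2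

variable (d) in
def Hf (hd : 2 ≤ d) : Fin d → Fin d → ℂ := fun i j =>
  if i = e0 d hd then
    (if j = e0 d hd then ((Real.sqrt 2)⁻¹ : ℝ) else if j = e1 d hd then ((Real.sqrt 2)⁻¹ : ℝ)
      else 0)
  else if i = e1 d hd then
    (if j = e0 d hd then ((Real.sqrt 2)⁻¹ : ℝ) else if j = e1 d hd then -((Real.sqrt 2)⁻¹ : ℝ)
      else 0)
  else (if j = i then 1 else 0)

lemma Hf_conj (hd : 2 ≤ d) (i j : Fin d) : (starRingEnd ℂ) (Hf d hd i j) = Hf d hd i j := by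
  unfold Hf
  split_ifs <;> simp

lemma sqrt2C : ((Real.sqrt 2 : ℝ) : ℂ) ^ 2 = 2 := by
  rw [← Complex.ofReal_pow, Real.sq_sqrt (by norm_num : (0:ℝ) ≤ 2)]
  norm_num

variable (d) in
def had (hd : 2 ≤ d) : G d :=
  ⟨Matrix.of (Hf d hd), by
    rw [Matrix.mem_unitaryGroup_iff]
    ext i j
    rw [Matrix.mul_apply]
    simp only [Matrix.star_apply, Matrix.of_apply, Complex.star_def, Hf_conj]
    by_cases hi0 : i = e0 d hd
    · subst hi0
      rw [sum_two hd _ (fun x hx0 hx1 => by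
        unfold Hf; rw [if_pos rfl, if_neg hx0, if_neg hx1, zero_mul])]
      by_cases hj0 : j = e0 d hd
      · subst hj0
        simp [Hf, e0_ne_e1 hd, (e0_ne_e1 hd).symm, Matrix.one_apply]
        ring_nf
        rw [inv_pow, sqrt2C]
        norm_num
      · by_cases hj1 : j = e1 d hd
        · subst hj1
          simp [Hf, e0_ne_e1 hd, (e0_ne_e1 hd).symm, Matrix.one_apply, hj0]
          try ring
        · simp [Hf, e0_ne_e1 hd, (e0_ne_e1 hd).symm, Matrix.one_apply, hj0, hj1,
            Ne.symm hj0, Ne.symm hj1]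
    · by_cases hi1 : i = e1 d hd
      · subst hi1
        rw [sum_two hd _ (fun x hx0 hx1 => by
          unfold Hf; rw [if_neg (e0_ne_e1 hd).symm, if_pos rfl, if_neg hx0, if_neg hx1,
            zero_mul])]
        by_cases hj0 : j = e0 d hd
        · subst hj0
          simp [Hf, e0_ne_e1 hd, (e0_ne_e1 hd).symm, Matrix.one_apply]
          try ring
        · by_cases hj1 : j = e1 d hd
          · subst hj1
            simp [Hf, e0_ne_e1 hd, (e0_ne_e1 hd).symm, Matrix.one_apply]
            ring_nf
            rw [inv_pow, sqrt2C]
            norm_num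
          · simp [Hf, e0_ne_e1 hd, (e0_ne_e1 hd).symm, Matrix.one_apply, hj0, hj1,
              Ne.symm hj0, Ne.symm hj1]
      · have hrow : ∀ k, Hf d hd i k = if k = i then 1 else 0 := fun k => by
          unfold Hf; rw [if_neg hi0, if_neg hi1]
        simp only [hrow, ite_mul, one_mul, zero_mul, Finset.sum_ite_eq', Finset.mem_univ,
          if_true]
        by_cases hj0 : j = e0 d hd
        · subst hj0
          simp [Hf, hi0, hi1, Matrix.one_apply, Ne.symm hi0, Ne.symm hi1]
        · by_cases hj1 : j = e1 d hd
          · subst hj1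
            simp [Hf, hi0, hi1, Matrix.one_apply, Ne.symm hi0, Ne.symm hi1]
          · simp [Hf, hj0, hj1, Matrix.one_apply, eq_comm]⟩


lemma had_coe (hd : 2 ≤ d) : ((had d hd : G d) : Matrix (Fin d) (Fin d) ℂ)
    = Matrix.of (Hf d hd) := rfl

lemma Hf_row_e0 (hd : 2 ≤ d) (x : Fin d) (hx0 : x ≠ e0 d hd) (hx1 : x ≠ e1 d hd) :
    Hf d hd (e0 d hd) x = 0 := by
  unfold Hf
  rw [if_pos rfl, if_neg hx0, if_neg hx1]

lemma Hf_e0_e0 (hd : 2 ≤ d) : Hf d hd (e0 d hd) (e0 d hd) = (((Real.sqrt 2)⁻¹ : ℝ) : ℂ) := by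
  unfold Hf; rw [if_pos rfl, if_pos rfl]

lemma Hf_e0_e1 (hd : 2 ≤ d) : Hf d hd (e0 d hd) (e1 d hd) = (((Real.sqrt 2)⁻¹ : ℝ) : ℂ) := by
  unfold Hf; rw [if_pos rfl, if_neg (e0_ne_e1 hd).symm, if_pos rfl]

lemma sum_two_prod (hd : 2 ≤ d) (g : Fin d × Fin d → ℂ) :
    ∑ r : Fin d × Fin d, (Hf d hd (e0 d hd) r.1 * Hf d hd (e0 d hd) r.2) * g r
      = Hf d hd (e0 d hd) (e0 d hd) * Hf d hd (e0 d hd) (e0 d hd) * g (e0 d hd, e0 d hd)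
      + Hf d hd (e0 d hd) (e0 d hd) * Hf d hd (e0 d hd) (e1 d hd) * g (e0 d hd, e1 d hd)
      + Hf d hd (e0 d hd) (e1 d hd) * Hf d hd (e0 d hd) (e0 d hd) * g (e1 d hd, e0 d hd)
      + Hf d hd (e0 d hd) (e1 d hd) * Hf d hd (e0 d hd) (e1 d hd) * g (e1 d hd, e1 d hd) := by
  rw [Fintype.sum_prod_type]
  have h1 : ∀ r1, ∑ r2, (Hf d hd (e0 d hd) r1 * Hf d hd (e0 d hd) r2) * g (r1, r2)
      = Hf d hd (e0 d hd) r1 * Hf d hd (e0 d hd) (e0 d hd) * g (r1, e0 d hd)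
        + Hf d hd (e0 d hd) r1 * Hf d hd (e0 d hd) (e1 d hd) * g (r1, e1 d hd) := fun r1 =>
    sum_two hd _ (fun x hx0 hx1 => by rw [Hf_row_e0 hd x hx0 hx1, mul_zero, zero_mul])
  rw [sum_two hd _ (fun x hx0 hx1 => Finset.sum_eq_zero fun r2 _ => by
    rw [Hf_row_e0 hd x hx0 hx1, zero_mul, zero_mul])]
  rw [h1, h1]
  ring

lemma sum_two_prod' (hd : 2 ≤ d) (g : Fin d × Fin d → ℂ) :
    ∑ r : Fin d × Fin d, g r * (Hf d hd (e0 d hd) r.1 * Hf d hd (e0 d hd) r.2)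
      = Hf d hd (e0 d hd) (e0 d hd) * Hf d hd (e0 d hd) (e0 d hd) * g (e0 d hd, e0 d hd)
      + Hf d hd (e0 d hd) (e0 d hd) * Hf d hd (e0 d hd) (e1 d hd) * g (e0 d hd, e1 d hd)
      + Hf d hd (e0 d hd) (e1 d hd) * Hf d hd (e0 d hd) (e0 d hd) * g (e1 d hd, e0 d hd)
      + Hf d hd (e0 d hd) (e1 d hd) * Hf d hd (e0 d hd) (e1 d hd) * g (e1 d hd, e1 d hd) := by
  rw [← sum_two_prod hd g]
  exact Finset.sum_congr rfl fun r _ => mul_comm _ _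

lemma had_rel (μ : Measure (G d)) [μ.IsHaarMeasure] [IsProbabilityMeasure μ]
    (A : Matrix (Fin d × Fin d) (Fin d × Fin d) ℂ) (hd : 2 ≤ d) :
    Mint d μ A (e0 d hd, e0 d hd) (e0 d hd, e0 d hd)
      = Mint d μ A (e0 d hd, e1 d hd) (e0 d hd, e1 d hd)
        + Mint d μ A (e0 d hd, e1 d hd) (e1 d hd, e0 d hd) := by
  have h := inv_entry μ A (had d hd) (e0 d hd, e0 d hd) (e0 d hd, e0 d hd)
  simp only [had_coe, Matrix.kroneckerMap_apply, Matrix.of_apply, _root_.map_mul, Hf_conj] at h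
  simp_rw [sum_two_prod hd] at h
  rw [sum_two_prod' hd] at h
  have h01 : (e0 d hd) ≠ (e1 d hd) := e0_ne_e1 hd
  have h10 : (e1 d hd) ≠ (e0 d hd) := (e0_ne_e1 hd).symm
  -- zero entries
  have z1 : Mint d μ A (e0 d hd, e0 d hd) (e0 d hd, e1 d hd) = 0 :=
    Mint_eq_zero μ A _ _ (by simp [Prod.ext_iff, h10]) (by simp [Prod.ext_iff, h10])
  have z2 : Mint d μ A (e0 d hd, e0 d hd) (e1 d hd, e0 d hd) = 0 :=
    Mint_eq_zero μ A _ _ (by simp [Prod.ext_iff, h10]) (by simp [Prod.ext_iff, h10])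
  have z3 : Mint d μ A (e0 d hd, e0 d hd) (e1 d hd, e1 d hd) = 0 :=
    Mint_eq_zero μ A _ _ (by simp [Prod.ext_iff, h10]) (by simp [Prod.ext_iff, h10])
  have z4 : Mint d μ A (e0 d hd, e1 d hd) (e0 d hd, e0 d hd) = 0 :=
    Mint_eq_zero μ A _ _ (by simp [Prod.ext_iff, h10, h01]) (by simp [Prod.ext_iff, h10, h01])
  have z5 : Mint d μ A (e0 d hd, e1 d hd) (e1 d hd, e1 d hd) = 0 :=
    Mint_eq_zero μ A _ _ (by simp [Prod.ext_iff, h10, h01]) (by simp [Prod.ext_iff, h10, h01])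
  have z6 : Mint d μ A (e1 d hd, e0 d hd) (e0 d hd, e0 d hd) = 0 :=
    Mint_eq_zero μ A _ _ (by simp [Prod.ext_iff, h10, h01]) (by simp [Prod.ext_iff, h10, h01])
  have z7 : Mint d μ A (e1 d hd, e0 d hd) (e1 d hd, e1 d hd) = 0 :=
    Mint_eq_zero μ A _ _ (by simp [Prod.ext_iff, h10, h01]) (by simp [Prod.ext_iff, h10, h01])
  have z8 : Mint d μ A (e1 d hd, e1 d hd) (e0 d hd, e0 d hd) = 0 :=
    Mint_eq_zero μ A _ _ (by simp [Prod.ext_iff, h01]) (by simp [Prod.ext_iff, h01])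
  have z9 : Mint d μ A (e1 d hd, e1 d hd) (e0 d hd, e1 d hd) = 0 :=
    Mint_eq_zero μ A _ _ (by simp [Prod.ext_iff, h01]) (by simp [Prod.ext_iff, h01])
  have z10 : Mint d μ A (e1 d hd, e1 d hd) (e1 d hd, e0 d hd) = 0 :=
    Mint_eq_zero μ A _ _ (by simp [Prod.ext_iff, h01]) (by simp [Prod.ext_iff, h01])
  -- permutation relations with the swap of e0 and e1
  have hp1 : Mint d μ A (e1 d hd, e0 d hd) (e1 d hd, e0 d hd)
      = Mint d μ A (e0 d hd, e1 d hd) (e0 d hd, e1 d hd) := by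
    have := perm_rel μ A (Equiv.swap (e0 d hd) (e1 d hd)) (e0 d hd, e1 d hd) (e0 d hd, e1 d hd)
    simpa [Equiv.swap_apply_left, Equiv.swap_apply_right] using this
  have hp2 : Mint d μ A (e1 d hd, e0 d hd) (e0 d hd, e1 d hd)
      = Mint d μ A (e0 d hd, e1 d hd) (e1 d hd, e0 d hd) := by
    have := perm_rel μ A (Equiv.swap (e0 d hd) (e1 d hd)) (e0 d hd, e1 d hd) (e1 d hd, e0 d hd)
    simpa [Equiv.swap_apply_left, Equiv.swap_apply_right] using this
  have hp3 : Mint d μ A (e1 d hd, e1 d hd) (e1 d hd, e1 d hd)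
      = Mint d μ A (e0 d hd, e0 d hd) (e0 d hd, e0 d hd) := by
    have := perm_rel μ A (Equiv.swap (e0 d hd) (e1 d hd)) (e0 d hd, e0 d hd) (e0 d hd, e0 d hd)
    simpa [Equiv.swap_apply_left, Equiv.swap_apply_right] using this
  rw [Hf_e0_e0, Hf_e0_e1, z1, z2, z3, z4, z5, z6, z7, z8, z9, z10, hp1, hp2, hp3] at h
  have hss : (((Real.sqrt 2)⁻¹ : ℝ) : ℂ) * (((Real.sqrt 2)⁻¹ : ℝ) : ℂ) = 1 / 2 := by
    rw [← Complex.ofReal_mul, ← mul_inv, Real.mul_self_sqrt (by norm_num : (0:ℝ) ≤ 2)]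
    norm_num
  set sC : ℂ := (((Real.sqrt 2)⁻¹ : ℝ) : ℂ) with hsC
  set M00 := Mint d μ A (e0 d hd, e0 d hd) (e0 d hd, e0 d hd)
  set Ma := Mint d μ A (e0 d hd, e1 d hd) (e0 d hd, e1 d hd)
  set Mb := Mint d μ A (e0 d hd, e1 d hd) (e1 d hd, e0 d hd)
  linear_combination (-2 : ℂ) * h
    + 2 * (2*M00 + 2*Ma + 2*Mb) * (sC * sC + 1/2) * hss


lemma twirl_trace (A : Matrix (Fin d × Fin d) (Fin d × Fin d) ℂ) (U : G d) :
    (twirl d A U).trace = A.trace := by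
  unfold twirl
  rw [Matrix.trace_mul_cycle, ← Matrix.mul_kronecker_mul]
  rw [Matrix.mem_unitaryGroup_iff'.mp U.2, Matrix.one_kronecker_one, one_mul]

lemma Mint_trace (μ : Measure (G d)) [IsProbabilityMeasure μ]
    (A : Matrix (Fin d × Fin d) (Fin d × Fin d) ℂ) :
    ∑ p, Mint d μ A p p = A.trace := by
  unfold Mint
  simp only [Matrix.of_apply]
  rw [← integral_finset_sum _ (fun p _ => integrable_twirl μ A p p)]
  have hpt : ∀ U : G d, ∑ p, twirl d A U p p = A.trace := fun U => twirl_trace A U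
  simp_rw [hpt]
  simp

lemma W_mul_apply (B : Matrix (Fin d × Fin d) (Fin d × Fin d) ℂ) (p q : Fin d × Fin d) :
    (swapMatrix d * B) p q = B (Prod.swap p) q := by
  rw [Matrix.mul_apply]
  have hcond : ∀ s : Fin d × Fin d, (p.1 = s.2 ∧ p.2 = s.1) ↔ s = Prod.swap p := by
    intro s
    rw [Prod.ext_iff]
    constructor
    · rintro ⟨h1, h2⟩; exact ⟨h2.symm, h1.symm⟩
    · rintro ⟨h1, h2⟩; exact ⟨h2.symm, h1.symm⟩
  simp_rw [swapMatrix, Matrix.of_apply, hcond, ite_mul, one_mul, zero_mul,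
    Finset.sum_ite_eq', Finset.mem_univ, if_true]

lemma mul_W_apply (B : Matrix (Fin d × Fin d) (Fin d × Fin d) ℂ) (p q : Fin d × Fin d) :
    (B * swapMatrix d) p q = B p (Prod.swap q) := by
  rw [Matrix.mul_apply]
  have hcond : ∀ s : Fin d × Fin d, (s.1 = q.2 ∧ s.2 = q.1) ↔ s = Prod.swap q := by
    intro s
    rw [Prod.ext_iff]
    tauto
  simp_rw [swapMatrix, Matrix.of_apply, hcond, mul_ite, mul_one, mul_zero,
    Finset.sum_ite_eq', Finset.mem_univ, if_true]

lemma W_comm (C C' : Matrix (Fin d) (Fin d) ℂ) :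
    swapMatrix d * (C ⊗ₖ C') = (C' ⊗ₖ C) * swapMatrix d := by
  ext p q
  rw [W_mul_apply, mul_W_apply]
  simp only [Matrix.kroneckerMap_apply, Prod.fst_swap, Prod.snd_swap]
  ring

lemma twirl_swap_trace (A : Matrix (Fin d × Fin d) (Fin d × Fin d) ℂ) (U : G d) :
    (swapMatrix d * twirl d A U).trace = (swapMatrix d * A).trace := by
  unfold twirl
  have h1 : swapMatrix d * (((U : Matrix (Fin d) (Fin d) ℂ) ⊗ₖ (U : Matrix (Fin d) (Fin d) ℂ))
      * A * (star (U : Matrix (Fin d) (Fin d) ℂ) ⊗ₖ star (U : Matrix (Fin d) (Fin d) ℂ)))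
      = ((U : Matrix (Fin d) (Fin d) ℂ) ⊗ₖ (U : Matrix (Fin d) (Fin d) ℂ))
        * (swapMatrix d * A) * (star (U : Matrix (Fin d) (Fin d) ℂ)
          ⊗ₖ star (U : Matrix (Fin d) (Fin d) ℂ)) := by
    rw [← mul_assoc, ← mul_assoc, ← mul_assoc, W_comm]
  rw [h1, Matrix.trace_mul_cycle, ← Matrix.mul_kronecker_mul,
    Matrix.mem_unitaryGroup_iff'.mp U.2, Matrix.one_kronecker_one, one_mul]

lemma Mint_swap_trace (μ : Measure (G d)) [IsProbabilityMeasure μ]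
    (A : Matrix (Fin d × Fin d) (Fin d × Fin d) ℂ) :
    ∑ p, Mint d μ A (Prod.swap p) p = (swapMatrix d * A).trace := by
  unfold Mint
  simp only [Matrix.of_apply]
  rw [← integral_finset_sum _ (fun p _ => integrable_twirl μ A _ p)]
  have hpt : ∀ U : G d, ∑ p, twirl d A U (Prod.swap p) p = (swapMatrix d * A).trace := by
    intro U
    rw [← twirl_swap_trace A U, Matrix.trace]
    exact Finset.sum_congr rfl fun p _ => (W_mul_apply _ _ _).symm
  simp_rw [hpt]
  simp


lemma trace_eq_rank {n : ℕ} {P : Matrix (Fin n) (Fin n) ℂ} (hH : P.IsHermitian)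
    (hP : P * P = P) : P.trace = (P.rank : ℂ) := by
  classical
  set V := (hH.eigenvectorUnitary : Matrix (Fin n) (Fin n) ℂ) with hV
  have hVsV : V * star V = 1 := Matrix.mem_unitaryGroup_iff.mp hH.eigenvectorUnitary.2
  have hsVV : star V * V = 1 := Matrix.mem_unitaryGroup_iff'.mp hH.eigenvectorUnitary.2
  have h1 : star V * P * V = Matrix.diagonal (RCLike.ofReal ∘ hH.eigenvalues) :=
    by rw [hV]; simpa using hH.conjStarAlgAut_star_eigenvectorUnitary
  have hdiag : Matrix.diagonal (fun i => (RCLike.ofReal ∘ hH.eigenvalues : Fin n → ℂ) i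
      * (RCLike.ofReal ∘ hH.eigenvalues : Fin n → ℂ) i)
      = Matrix.diagonal (RCLike.ofReal ∘ hH.eigenvalues : Fin n → ℂ) := by
    rw [← Matrix.diagonal_mul_diagonal, ← h1]
    rw [show (star V * P * V) * (star V * P * V)
        = star V * (P * ((V * star V) * (P * V))) from by simp only [mul_assoc]]
    rw [hVsV, one_mul, show star V * (P * (P * V)) = star V * ((P * P) * V) from by
      simp only [mul_assoc], hP]
    simp only [mul_assoc]
  have heig : ∀ i, hH.eigenvalues i = 0 ∨ hH.eigenvalues i = 1 := by
    intro i
    have h3 : ((hH.eigenvalues i : ℝ) : ℂ) * ((hH.eigenvalues i : ℝ) : ℂ)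
        = ((hH.eigenvalues i : ℝ) : ℂ) := by
      have h4 := congrArg (fun M => M i i) hdiag
      simpa [Matrix.diagonal_apply_eq, Pi.mul_apply, Function.comp] using h4
    have h5 : (hH.eigenvalues i) * (hH.eigenvalues i) = hH.eigenvalues i := by
      exact_mod_cast h3
    have h6 : (hH.eigenvalues i) * (hH.eigenvalues i - 1) = 0 := by linear_combination h5
    rcases mul_eq_zero.mp h6 with h7 | h7
    · exact Or.inl h7
    · exact Or.inr (by linarith [sub_eq_zero.mp h7])
  have htr : P.trace = ∑ i, ((hH.eigenvalues i : ℝ) : ℂ) := by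
    conv_lhs => rw [hH.spectral_theorem]
    rw [Unitary.conjStarAlgAut_apply, Matrix.trace_mul_cycle, ← hV, hsVV, one_mul, Matrix.trace_diagonal]
    rfl
  rw [htr, hH.rank_eq_card_non_zero_eigs]
  have hterm : ∀ i, ((hH.eigenvalues i : ℝ) : ℂ) = if hH.eigenvalues i ≠ 0 then 1 else 0 := by
    intro i
    rcases heig i with h | h <;> simp [h]
  rw [Finset.sum_congr rfl fun i _ => hterm i, Finset.sum_boole, Fintype.card_subtype]


lemma exists_perm_two (hd : 2 ≤ d) (i j : Fin d) (hij : i ≠ j) :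
    ∃ sg : Equiv.Perm (Fin d), sg (e0 d hd) = i ∧ sg (e1 d hd) = j := by
  set s1 := Equiv.swap (e0 d hd) i with hs1
  set j1 := s1 (e1 d hd) with hj1
  have hij1 : i ≠ j1 := by
    intro hcon
    have : s1 (e0 d hd) = i := Equiv.swap_apply_left _ _
    have heq : s1 (e0 d hd) = s1 (e1 d hd) := by rw [this, hcon]
    exact e0_ne_e1 hd (s1.injective heq)
  refine ⟨s1.trans (Equiv.swap j1 j), ?_, ?_⟩
  · simp only [Equiv.trans_apply, ← hs1]
    rw [Equiv.swap_apply_left]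
    exact Equiv.swap_apply_of_ne_of_ne hij1 hij
  · simp only [Equiv.trans_apply, ← hs1, ← hj1]
    exact Equiv.swap_apply_left _ _

lemma Mint_struct (μ : Measure (G d)) [μ.IsHaarMeasure] [IsProbabilityMeasure μ]
    (A : Matrix (Fin d × Fin d) (Fin d × Fin d) ℂ) (hd : 2 ≤ d) (p q : Fin d × Fin d) :
    Mint d μ A p q
      = Mint d μ A (e0 d hd, e1 d hd) (e0 d hd, e1 d hd)
          * (1 : Matrix (Fin d × Fin d) (Fin d × Fin d) ℂ) p q
        + Mint d μ A (e0 d hd, e1 d hd) (e1 d hd, e0 d hd) * swapMatrix d p q := by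
  by_cases hqp : q = p
  · subst hqp
    by_cases hdg : q.1 = q.2
    · have hq : q = (q.1, q.1) := Prod.ext rfl hdg.symm
      have hperm := perm_rel μ A (Equiv.swap (e0 d hd) q.1) (e0 d hd, e0 d hd) (e0 d hd, e0 d hd)
      rw [Equiv.swap_apply_left] at hperm
      have hcc := had_rel μ A hd
      rw [hq, hperm, hcc]
      simp [Matrix.one_apply, swapMatrix]
      try ring
    · obtain ⟨sg, h0, h1⟩ := exists_perm_two hd q.1 q.2 hdg
      have hperm := perm_rel μ A sg (e0 d hd, e1 d hd) (e0 d hd, e1 d hd)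
      rw [h0, h1, Prod.mk.eta] at hperm
      rw [hperm]
      simp [Matrix.one_apply, swapMatrix, hdg]
  · by_cases hqs : q = Prod.swap p
    · have hps : p.1 ≠ p.2 := by
        intro hcon
        exact hqp (hqs.trans (Prod.ext hcon.symm hcon))
      obtain ⟨sg, h0, h1⟩ := exists_perm_two hd p.1 p.2 hps
      have hperm := perm_rel μ A sg (e0 d hd, e1 d hd) (e1 d hd, e0 d hd)
      rw [h0, h1, Prod.mk.eta] at hperm
      have hsw : Prod.swap p = (p.2, p.1) := rfl
      rw [hqs, hsw, hperm]
      have h1q : ¬(p = (p.2, p.1)) := fun hcon => hps (congrArg Prod.fst hcon)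
      simp [Matrix.one_apply, swapMatrix, h1q]
    · rw [Mint_eq_zero μ A p q hqp hqs]
      have hW : ¬(p.1 = q.2 ∧ p.2 = q.1) := fun hcon => hqs (Prod.ext hcon.2.symm hcon.1.symm)
      have h1q : ¬(p = q) := fun hcon => hqp hcon.symm
      simp [Matrix.one_apply, swapMatrix, hW, h1q]


lemma trace_W_kron (B C : Matrix (Fin d) (Fin d) ℂ) :
    (swapMatrix d * (B ⊗ₖ C)).trace = (B * C).trace := by
  rw [Matrix.trace, Matrix.trace]
  have h : ∀ p : Fin d × Fin d, (swapMatrix d * (B ⊗ₖ C)).diag p = B p.2 p.1 * C p.1 p.2 := by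
    intro p
    rw [Matrix.diag_apply, W_mul_apply, Matrix.kroneckerMap_apply, Prod.fst_swap,
      Prod.snd_swap]
  rw [Finset.sum_congr rfl fun p _ => h p, Fintype.sum_prod_type, Finset.sum_comm]
  refine Finset.sum_congr rfl fun j _ => ?_
  rw [Matrix.diag_apply, Matrix.mul_apply]

lemma sum_one_diag (hd : 2 ≤ d) :
    ∑ p : Fin d × Fin d, (1 : Matrix (Fin d × Fin d) (Fin d × Fin d) ℂ) p p = (d:ℂ)^2 := by
  simp only [Matrix.one_apply_eq]
  simp [Finset.card_univ]
  ring

lemma sum_W_diag (hd : 2 ≤ d) :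
    ∑ p : Fin d × Fin d, swapMatrix d p p = (d:ℂ) := by
  simp only [swapMatrix, Matrix.of_apply]
  rw [Fintype.sum_prod_type]
  have hcond : ∀ i j : Fin d, (i = j ∧ j = i) ↔ (j = i) :=
    fun i j => ⟨fun h => h.2, fun h => ⟨h.symm, h⟩⟩
  simp_rw [hcond]
  simp [Finset.sum_ite_eq', Finset.card_univ]

lemma sum_one_swap (hd : 2 ≤ d) :
    ∑ p : Fin d × Fin d, (1 : Matrix (Fin d × Fin d) (Fin d × Fin d) ℂ) (Prod.swap p) p
      = (d:ℂ) := by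
  simp only [Matrix.one_apply]
  rw [Fintype.sum_prod_type]
  have hcond : ∀ i j : Fin d, (Prod.swap (i, j) = (i, j)) ↔ (j = i) := by
    intro i j
    rw [Prod.ext_iff]
    exact ⟨fun h => h.1, fun h => ⟨h, h.symm⟩⟩
  simp_rw [hcond]
  simp [Finset.sum_ite_eq', Finset.card_univ]

lemma sum_W_swap (hd : 2 ≤ d) :
    ∑ p : Fin d × Fin d, swapMatrix d (Prod.swap p) p = (d:ℂ)^2 := by
  simp only [swapMatrix, Matrix.of_apply, Prod.fst_swap, Prod.snd_swap]
  simp [Finset.card_univ]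
  ring

lemma Mint_final (μ : Measure (G d)) [μ.IsHaarMeasure] [IsProbabilityMeasure μ]
    (A : Matrix (Fin d × Fin d) (Fin d × Fin d) ℂ) (hd : 2 ≤ d) (t1 t2 : ℂ)
    (h1 : A.trace = t1) (h2 : (swapMatrix d * A).trace = t2) (p q : Fin d × Fin d) :
    Mint d μ A p q
      = ((t1 * d - t2) / ((d:ℂ) * ((d:ℂ)^2 - 1)))
          * (1 : Matrix (Fin d × Fin d) (Fin d × Fin d) ℂ) p q
        + ((t2 * d - t1) / ((d:ℂ) * ((d:ℂ)^2 - 1))) * swapMatrix d p q := by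
  have hd0 : (d:ℂ) ≠ 0 := Nat.cast_ne_zero.mpr (by omega)
  have hd1 : (d:ℂ)^2 - 1 ≠ 0 := by
    intro hcon
    have h3 : ((d^2 : ℕ) : ℂ) = ((1:ℕ) : ℂ) := by push_cast; linear_combination hcon
    have h4 : d^2 = 1 := Nat.cast_injective h3
    nlinarith [h4, hd]
  set aa := Mint d μ A (e0 d hd, e1 d hd) (e0 d hd, e1 d hd) with haa_def
  set bb := Mint d μ A (e0 d hd, e1 d hd) (e1 d hd, e0 d hd) with hbb_def
  have eq1 : (d:ℂ)^2 * aa + (d:ℂ) * bb = t1 := by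
    rw [← h1, ← Mint_trace μ A]
    rw [Finset.sum_congr rfl fun p _ => Mint_struct μ A hd p p]
    rw [Finset.sum_add_distrib, ← Finset.mul_sum, ← Finset.mul_sum, sum_one_diag hd,
      sum_W_diag hd]
    ring
  have eq2 : (d:ℂ) * aa + (d:ℂ)^2 * bb = t2 := by
    rw [← h2, ← Mint_swap_trace μ A]
    rw [Finset.sum_congr rfl fun p _ => Mint_struct μ A hd (Prod.swap p) p]
    rw [Finset.sum_add_distrib, ← Finset.mul_sum, ← Finset.mul_sum, sum_one_swap hd,
      sum_W_swap hd]
    ring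
  have haa : aa = (t1 * d - t2) / ((d:ℂ) * ((d:ℂ)^2 - 1)) := by
    rw [eq_div_iff (mul_ne_zero hd0 hd1)]
    linear_combination (d:ℂ) * eq1 - eq2
  have hbb : bb = (t2 * d - t1) / ((d:ℂ) * ((d:ℂ)^2 - 1)) := by
    rw [eq_div_iff (mul_ne_zero hd0 hd1)]
    linear_combination (d:ℂ) * eq2 - eq1
  rw [Mint_struct μ A hd p q, ← haa_def, ← hbb_def, haa, hbb]

end Stmt19Aux

/-- Proposition A.2: the two-fold twirl of `Π₁ ⊗ Π₂` for nested projections, entrywise. -/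
theorem stmt_19 (d : ℕ) (hd : 2 ≤ d)
    (μ : Measure (Matrix.unitaryGroup (Fin d) ℂ)) [μ.IsHaarMeasure] [IsProbabilityMeasure μ]
    (P₁ P₂ : Matrix (Fin d) (Fin d) ℂ) (r₁ r₂ : ℕ)
    (hP₁herm : P₁.IsHermitian) (hP₁proj : P₁ * P₁ = P₁) (hr₁ : P₁.rank = r₁)
    (hP₂herm : P₂.IsHermitian) (hP₂proj : P₂ * P₂ = P₂) (hr₂ : P₂.rank = r₂)
    (hrange : LinearMap.range (Matrix.toLin' P₁) ≤ LinearMap.range (Matrix.toLin' P₂)) :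
    ∀ p q : Fin d × Fin d,
      (∫ U : Matrix.unitaryGroup (Fin d) ℂ,
          ((((U : Matrix (Fin d) (Fin d) ℂ) ⊗ₖ (U : Matrix (Fin d) (Fin d) ℂ)) *
            (P₁ ⊗ₖ P₂) *
            (star (U : Matrix (Fin d) (Fin d) ℂ) ⊗ₖ star (U : Matrix (Fin d) (Fin d) ℂ))) p q)
          ∂μ) =
        (((r₁ : ℂ) / ((d : ℂ) * ((d : ℂ) ^ 2 - 1))) •
          (((r₂ : ℂ) * d - 1) • (1 : Matrix (Fin d × Fin d) (Fin d × Fin d) ℂ) +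
            ((d : ℂ) - r₂) • swapMatrix d)) p q := by
  intro p q
  have hP21 : P₂ * P₁ = P₁ := by
    refine Matrix.toLin'.injective (LinearMap.ext fun v => ?_)
    rw [Matrix.toLin'_mul, LinearMap.comp_apply]
    have hv : Matrix.toLin' P₁ v ∈ LinearMap.range (Matrix.toLin' P₂) :=
      hrange (LinearMap.mem_range_self _ v)
    obtain ⟨w, hw⟩ := hv
    rw [← hw, ← LinearMap.comp_apply, ← Matrix.toLin'_mul, hP₂proj]
  have hP12 : P₁ * P₂ = P₁ := by
    have h := congrArg Matrix.conjTranspose hP21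
    rw [Matrix.conjTranspose_mul, hP₁herm.eq, hP₂herm.eq] at h
    exact h
  have htr1 : P₁.trace = (r₁ : ℂ) := by
    rw [Stmt19Aux.trace_eq_rank hP₁herm hP₁proj, hr₁]
  have htr2 : P₂.trace = (r₂ : ℂ) := by
    rw [Stmt19Aux.trace_eq_rank hP₂herm hP₂proj, hr₂]
  have h1 : (P₁ ⊗ₖ P₂).trace = (r₁ : ℂ) * r₂ := by
    rw [Matrix.trace_kronecker, htr1, htr2]
  have h2 : (swapMatrix d * (P₁ ⊗ₖ P₂)).trace = (r₁ : ℂ) := by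
    rw [Stmt19Aux.trace_W_kron, hP12, htr1]
  have hfin := Stmt19Aux.Mint_final μ (P₁ ⊗ₖ P₂) hd _ _ h1 h2 p q
  have hM : (∫ U : Matrix.unitaryGroup (Fin d) ℂ,
      ((((U : Matrix (Fin d) (Fin d) ℂ) ⊗ₖ (U : Matrix (Fin d) (Fin d) ℂ)) *
        (P₁ ⊗ₖ P₂) *
        (star (U : Matrix (Fin d) (Fin d) ℂ) ⊗ₖ star (U : Matrix (Fin d) (Fin d) ℂ))) p q)
      ∂μ) = Stmt19Aux.Mint d μ (P₁ ⊗ₖ P₂) p q := rfl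
  rw [hM, hfin]
  have hd0 : (d:ℂ) ≠ 0 := Nat.cast_ne_zero.mpr (by omega)
  have hd1 : (d:ℂ)^2 - 1 ≠ 0 := by
    intro hcon
    have h3 : ((d^2 : ℕ) : ℂ) = ((1:ℕ) : ℂ) := by push_cast; linear_combination hcon
    have h4 : d^2 = 1 := Nat.cast_injective h3
    nlinarith [h4, hd]
  simp only [Matrix.smul_apply, Matrix.add_apply, smul_eq_mul]
  field_simp
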